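/- arXiv:1511.07505 — 2 statements merged into one kernel-verified Lean document; each statement's English description precedes it below -/
import Mathlib

section
/- Let R = ℂ[x,y], F = ℂ⟨X,Y⟩, let A₁, A₂ be unital ℂ-algebras, κ₁ : F → A₁ and κ₂ : F → A₂ ℂ-algebra homomorphisms, and δ : R → R ⊗ R an injective ℂ-algebra homomorphism. Let p, q₁, q₂ ∈ R and suppose δ(p) lies in the ideal of R ⊗ R generated by q₁⊗1 and 1⊗q₂. If Φ(q₁^l) ∈ ker κ₁ and Φ(q₂^m) ∈ ker κ₂ for some l, m ≥ 1, then with n = l + m − 1 the ℂ-linear map (κ₁∘Φ) ⊗ (κ₂∘Φ) : R ⊗ R → A₁ ⊗ A₂ sends δ(p^n) to 0. -/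
open scoped TensorProduct

/-- The ℂ-linear map `Φ : ℂ[x,y] → ℂ⟨X,Y⟩` determined on the monomial basis by
`Φ(x^i y^j) = X^i Y^j`. -/
noncomputable def Phi : MvPolynomial (Fin 2) ℂ →ₗ[ℂ] FreeAlgebra ℂ (Fin 2) :=
  (MvPolynomial.basisMonomials (Fin 2) ℂ).constr ℂ
    fun m => FreeAlgebra.ι ℂ 0 ^ m 0 * FreeAlgebra.ι ℂ 1 ^ m 1

lemma Phi_monomial (s : Fin 2 →₀ ℕ) :
    Phi (MvPolynomial.monomial s 1) =
      FreeAlgebra.ι ℂ 0 ^ s 0 * FreeAlgebra.ι ℂ 1 ^ s 1 := by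
  have h := Module.Basis.constr_basis (MvPolynomial.basisMonomials (Fin 2) ℂ) ℂ
    (fun m : Fin 2 →₀ ℕ => FreeAlgebra.ι ℂ (0 : Fin 2) ^ m 0 * FreeAlgebra.ι ℂ (1 : Fin 2) ^ m 1) s
  have hb : (MvPolynomial.basisMonomials (Fin 2) ℂ) s = MvPolynomial.monomial s 1 := by
    simp [MvPolynomial.coe_basisMonomials]
  rw [hb] at h
  simpa only [Phi] using h

lemma monomial_smul_one (s : Fin 2 →₀ ℕ) (c : ℂ) :
    (MvPolynomial.monomial s c : MvPolynomial (Fin 2) ℂ)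
      = c • MvPolynomial.monomial s 1 := by
  rw [MvPolynomial.smul_monomial, smul_eq_mul, mul_one]

lemma Phi_monomial_mul (s : Fin 2 →₀ ℕ) (f : MvPolynomial (Fin 2) ℂ) :
    Phi (MvPolynomial.monomial s 1 * f) =
      FreeAlgebra.ι ℂ 0 ^ s 0 * Phi f * FreeAlgebra.ι ℂ 1 ^ s 1 := by
  induction f using MvPolynomial.induction_on' with
  | monomial t c =>
      have h2 : MvPolynomial.monomial s 1 * MvPolynomial.monomial t (1 : ℂ)
          = MvPolynomial.monomial (s + t) 1 := by
        rw [MvPolynomial.monomial_mul, one_mul]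
      rw [monomial_smul_one t c, mul_smul_comm, map_smul, map_smul, h2, Phi_monomial, Phi_monomial]
      simp only [Finsupp.add_apply, pow_add, mul_smul_comm, smul_mul_assoc, mul_assoc]
      rw [((Commute.refl (FreeAlgebra.ι ℂ (1 : Fin 2))).pow_pow (s 1) (t 1)).eq]
  | add f g hf hg =>
      rw [mul_add, map_add, map_add, hf, hg, mul_add, add_mul]

lemma kappa_Phi_mul {A : Type*} [Ring A] [Algebra ℂ A]
    (κ : FreeAlgebra ℂ (Fin 2) →ₐ[ℂ] A) (q : MvPolynomial (Fin 2) ℂ)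
    (h : κ (Phi q) = 0) (f : MvPolynomial (Fin 2) ℂ) :
    κ (Phi (f * q)) = 0 := by
  induction f using MvPolynomial.induction_on' with
  | monomial s c =>
      rw [monomial_smul_one s c, smul_mul_assoc, map_smul, map_smul, Phi_monomial_mul,
        map_mul, map_mul, h, mul_zero, zero_mul, smul_zero]
  | add f g hf hg =>
      rw [add_mul, map_add, map_add, hf, hg, add_zero]

/-- Lemma 3.4: if `δ(p)` lies in the ideal of `R⊗R` generated by `q₁⊗1` and `1⊗q₂`,
`Φ(q₁^l) ∈ ker κ₁`, and `Φ(q₂^m) ∈ ker κ₂`, then `(κ₁∘Φ)⊗(κ₂∘Φ)` kills `δ(p^n)` where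
`n = l + m − 1`. -/
theorem weak_tensor_product_lemma
    {A₁ A₂ : Type*} [Ring A₁] [Algebra ℂ A₁] [Ring A₂] [Algebra ℂ A₂]
    (κ₁ : FreeAlgebra ℂ (Fin 2) →ₐ[ℂ] A₁) (κ₂ : FreeAlgebra ℂ (Fin 2) →ₐ[ℂ] A₂)
    (δ : MvPolynomial (Fin 2) ℂ →ₐ[ℂ] (MvPolynomial (Fin 2) ℂ ⊗[ℂ] MvPolynomial (Fin 2) ℂ))
    (hδ : Function.Injective δ) (p q₁ q₂ : MvPolynomial (Fin 2) ℂ)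
    (hp : δ p ∈ Ideal.span {q₁ ⊗ₜ[ℂ] (1 : MvPolynomial (Fin 2) ℂ),
            (1 : MvPolynomial (Fin 2) ℂ) ⊗ₜ[ℂ] q₂})
    (l m : ℕ) (hl : 1 ≤ l) (hm : 1 ≤ m)
    (h₁ : κ₁ (Phi (q₁ ^ l)) = 0) (h₂ : κ₂ (Phi (q₂ ^ m)) = 0) :
    TensorProduct.map (κ₁.toLinearMap ∘ₗ Phi) (κ₂.toLinearMap ∘ₗ Phi)
      (δ (p ^ (l + m - 1))) = 0 := by
  set K := TensorProduct.map (κ₁.toLinearMap ∘ₗ Phi) (κ₂.toLinearMap ∘ₗ Phi) with hK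
  have keyA : ∀ c : MvPolynomial (Fin 2) ℂ ⊗[ℂ] MvPolynomial (Fin 2) ℂ,
      K (c * ((q₁ ^ l) ⊗ₜ[ℂ] (1 : MvPolynomial (Fin 2) ℂ))) = 0 := by
    intro c
    induction c using TensorProduct.induction_on with
    | zero => rw [zero_mul, map_zero]
    | tmul f g =>
        rw [Algebra.TensorProduct.tmul_mul_tmul, hK, TensorProduct.map_tmul]
        simp only [LinearMap.comp_apply, AlgHom.toLinearMap_apply]
        rw [kappa_Phi_mul κ₁ (q₁ ^ l) h₁ f, TensorProduct.zero_tmul]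
    | add x y hx hy => rw [add_mul, map_add, hx, hy, add_zero]
  have keyB : ∀ c : MvPolynomial (Fin 2) ℂ ⊗[ℂ] MvPolynomial (Fin 2) ℂ,
      K (c * ((1 : MvPolynomial (Fin 2) ℂ) ⊗ₜ[ℂ] (q₂ ^ m))) = 0 := by
    intro c
    induction c using TensorProduct.induction_on with
    | zero => rw [zero_mul, map_zero]
    | tmul f g =>
        rw [Algebra.TensorProduct.tmul_mul_tmul, hK, TensorProduct.map_tmul]
        simp only [LinearMap.comp_apply, AlgHom.toLinearMap_apply]
        rw [kappa_Phi_mul κ₂ (q₂ ^ m) h₂ g, TensorProduct.tmul_zero]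
    | add x y hx hy => rw [add_mul, map_add, hx, hy, add_zero]
  obtain ⟨a, b, hab⟩ := Ideal.mem_span_pair.mp hp
  set n := l + m - 1 with hn
  rw [map_pow, ← hab, add_pow, map_sum]
  apply Finset.sum_eq_zero
  intro k hk
  rw [Finset.mem_range] at hk
  by_cases hkl : l ≤ k
  · have heq : (a * q₁ ⊗ₜ[ℂ] (1 : MvPolynomial (Fin 2) ℂ)) ^ k
        * (b * (1 : MvPolynomial (Fin 2) ℂ) ⊗ₜ[ℂ] q₂) ^ (n - k)
        * (n.choose k : MvPolynomial (Fin 2) ℂ ⊗[ℂ] MvPolynomial (Fin 2) ℂ)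
        = (a ^ k * ((q₁ ^ (k - l)) ⊗ₜ[ℂ] (1 : MvPolynomial (Fin 2) ℂ))
            * (b * (1 : MvPolynomial (Fin 2) ℂ) ⊗ₜ[ℂ] q₂) ^ (n - k)
            * (n.choose k : MvPolynomial (Fin 2) ℂ ⊗[ℂ] MvPolynomial (Fin 2) ℂ))
          * ((q₁ ^ l) ⊗ₜ[ℂ] (1 : MvPolynomial (Fin 2) ℂ)) := by
      simp only [mul_pow]
      have h3 : (q₁ ⊗ₜ[ℂ] (1 : MvPolynomial (Fin 2) ℂ)) ^ k
          = ((q₁ ^ (k - l)) ⊗ₜ[ℂ] (1 : MvPolynomial (Fin 2) ℂ))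
            * ((q₁ ^ l) ⊗ₜ[ℂ] (1 : MvPolynomial (Fin 2) ℂ)) := by
        rw [Algebra.TensorProduct.tmul_mul_tmul, ← pow_add, Nat.sub_add_cancel hkl, mul_one,
          Algebra.TensorProduct.tmul_pow, one_pow]
      rw [h3]; ring
    rw [heq, keyA]
  · push_neg at hkl
    have hmk : m ≤ n - k := by omega
    have heq : (a * q₁ ⊗ₜ[ℂ] (1 : MvPolynomial (Fin 2) ℂ)) ^ k
        * (b * (1 : MvPolynomial (Fin 2) ℂ) ⊗ₜ[ℂ] q₂) ^ (n - k)
        * (n.choose k : MvPolynomial (Fin 2) ℂ ⊗[ℂ] MvPolynomial (Fin 2) ℂ)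
        = ((a * q₁ ⊗ₜ[ℂ] (1 : MvPolynomial (Fin 2) ℂ)) ^ k
            * (b ^ (n - k) * ((1 : MvPolynomial (Fin 2) ℂ) ⊗ₜ[ℂ] (q₂ ^ (n - k - m))))
            * (n.choose k : MvPolynomial (Fin 2) ℂ ⊗[ℂ] MvPolynomial (Fin 2) ℂ))
          * ((1 : MvPolynomial (Fin 2) ℂ) ⊗ₜ[ℂ] (q₂ ^ m)) := by
      simp only [mul_pow]
      have h3 : ((1 : MvPolynomial (Fin 2) ℂ) ⊗ₜ[ℂ] q₂) ^ (n - k)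
          = ((1 : MvPolynomial (Fin 2) ℂ) ⊗ₜ[ℂ] (q₂ ^ (n - k - m)))
            * ((1 : MvPolynomial (Fin 2) ℂ) ⊗ₜ[ℂ] (q₂ ^ m)) := by
        rw [Algebra.TensorProduct.tmul_mul_tmul, ← pow_add, Nat.sub_add_cancel hmk, one_mul,
          Algebra.TensorProduct.tmul_pow, one_pow]
      rw [h3]; ring
    rw [heq, keyB]
end

section
/- Let H be a complex Hilbert space, let T ∈ B(H) be not nilpotent, let λ ∈ ℂ, and let n ≥ 1. If γ_n(T*, λT) = Σ_{k=0}^n (−1)^{n−k} binom(n,k) (T*)^k (λT)^{n−k} = 0 (i.e. λT lies in the n-th Helton class of T*), then |λ| = 1. -/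
/-- `γ_n(S,T) = Σ_{k=0}^n (−1)^{n−k} C(n,k) S^k T^{n−k}`. -/
noncomputable def gamma {A : Type*} [Ring A] (n : ℕ) (S T : A) : A :=
  ∑ k ∈ Finset.range (n + 1), ((-1 : ℤ) ^ (n - k) * (n.choose k : ℤ)) • (S ^ k * T ^ (n - k))

section Aux

open Finset LinearMap

variable {A : Type*} [Ring A] [Algebra ℂ A]

lemma gamma_eq_c (n : ℕ) (S T : A) :
    gamma n S T
      = ∑ k ∈ Finset.range (n + 1),
          (((-1 : ℂ)) ^ (n - k) * (n.choose k : ℂ)) • (S ^ k * T ^ (n - k)) := by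
  unfold gamma
  refine Finset.sum_congr rfl fun k _ => ?_
  rw [← Int.cast_smul_eq_zsmul ℂ]
  push_cast
  ring_nf

lemma delta_pow_one (n : ℕ) (S T : A) :
    ((mulLeft ℂ S - mulRight ℂ T) ^ n) (1 : A) = gamma n S T := by
  have hc : Commute (mulLeft ℂ S) (-(mulRight ℂ T)) :=
    (commute_mulLeft_right (R := ℂ) S T).neg_right
  have hneg : -(mulRight ℂ T) = mulRight ℂ (-T) := by ext x; simp
  rw [sub_eq_add_neg, hc.add_pow, gamma_eq_c]
  rw [LinearMap.sum_apply]
  refine Finset.sum_congr rfl fun k hk => ?_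
  rw [hneg, pow_mulLeft, pow_mulRight]
  simp only [Module.End.mul_apply, Module.End.natCast_apply, mulRight_apply, mulLeft_apply,
    map_nsmul, one_mul]
  rcases Nat.even_or_odd (n - k) with he | ho
  · rw [he.neg_pow, he.neg_one_pow, one_mul, ← Nat.cast_smul_eq_nsmul ℂ]
  · rw [ho.neg_pow, ho.neg_one_pow, mul_neg, neg_one_mul, neg_smul, smul_neg,
      ← Nat.cast_smul_eq_nsmul ℂ]

lemma key {n : ℕ} (hn : 1 ≤ n) (S T : A) (r : ℂ) (hr : r ≠ 1)
    (h1 : gamma n S T = 0) (h2 : gamma n S (r • T) = 0) :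
    T ^ (2 * n - 1) = 0 := by
  set u : Module.End ℂ A := mulLeft ℂ S - mulRight ℂ T with hu_def
  set v : Module.End ℂ A := mulLeft ℂ S - mulRight ℂ (r • T) with hv_def
  have hu : (u ^ n) (1 : A) = 0 := by rw [hu_def, delta_pow_one]; exact h1
  have hv : (v ^ n) (1 : A) = 0 := by rw [hv_def, delta_pow_one]; exact h2
  have hrr : mulRight ℂ (r • T) = r • mulRight ℂ T := by
    ext x; simp [mul_smul_comm]
  have hLR : Commute (mulLeft ℂ S) (mulRight ℂ T) := commute_mulLeft_right S T
  have hc : Commute u v := by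
    rw [hu_def, hv_def, hrr]
    exact ((Commute.refl _).sub_right (hLR.smul_right r)).sub_left
      (hLR.symm.sub_right ((Commute.refl _).smul_right r))
  have hcom : Commute v (-u) := hc.symm.neg_right
  have hvu : v + -u = (1 - r) • mulRight ℂ T := by
    rw [hu_def, hv_def, hrr]
    ext x
    simp [sub_smul]
  set m := 2 * n - 1 with hm
  have hsum : ((v + -u) ^ m) (1 : A) = 0 := by
    rw [hcom.add_pow]
    rw [LinearMap.sum_apply]
    refine Finset.sum_eq_zero fun k hk => ?_
    rw [Finset.mem_range] at hk
    by_cases hkn : n ≤ m - k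
    · have hsplit : (-u) ^ (m - k) = (-u) ^ (m - k - n) * (-u) ^ n := by
        rw [← pow_add]; congr 1; omega
      have hun : ((-u) ^ n) ((1 : A)) = 0 := by
        rcases Nat.even_or_odd n with he | ho
        · rw [show (-u) ^ n = u ^ n from he.neg_pow u]; exact hu
        · rw [show (-u) ^ n = -u ^ n from ho.neg_pow u]; simp [hu]
      simp only [hsplit, Module.End.mul_apply, Module.End.natCast_apply]
      rw [map_nsmul, hun, smul_zero, map_zero, map_zero]
    · have hkn' : n ≤ k := by omega
      rw [(hcom.pow_pow k (m - k)).eq]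
      have hsplit : v ^ k = v ^ (k - n) * v ^ n := by rw [← pow_add]; congr 1; omega
      simp only [hsplit, Module.End.mul_apply, Module.End.natCast_apply]
      rw [map_nsmul, hv, smul_zero, map_zero, map_zero]
  have hT : ((1 - r) ^ m) • T ^ m = 0 := by
    rw [hvu, smul_pow] at hsum
    have h2 : ((mulRight ℂ T) ^ m) (1 : A) = T ^ m := by
      rw [pow_mulRight]; simp
    rw [LinearMap.smul_apply, h2] at hsum
    exact hsum
  have hne : ((1 : ℂ) - r) ^ m ≠ 0 := by
    apply pow_ne_zero
    intro h0
    exact hr (by linear_combination -h0)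
  exact (smul_eq_zero.mp hT).resolve_left hne

lemma gamma_smul_smul (n : ℕ) (μ : ℂ) (S T : A) :
    gamma n (μ • S) (μ • T) = μ ^ n • gamma n S T := by
  rw [gamma_eq_c, gamma_eq_c, Finset.smul_sum]
  refine Finset.sum_congr rfl fun k hk => ?_
  rw [Finset.mem_range_succ_iff] at hk
  rw [smul_pow, smul_pow, smul_mul_smul_comm, smul_smul, smul_smul]
  congr 1
  rw [← pow_add, Nat.add_sub_cancel' hk]
  ring

lemma star_gamma [StarRing A] [StarModule ℂ A] (n : ℕ) (S T : A) :
    star (gamma n S T) = ((-1 : ℂ) ^ n) • gamma n (star T) (star S) := by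
  rw [gamma_eq_c, gamma_eq_c, star_sum, Finset.smul_sum]
  rw [← Finset.sum_range_reflect]
  refine Finset.sum_congr rfl fun k hk => ?_
  rw [Finset.mem_range] at hk
  have hk' : k ≤ n := by omega
  have e1 : n + 1 - 1 - k = n - k := by omega
  have e2 : n - (n - k) = k := by omega
  rw [e1, e2, star_smul, smul_smul]
  have e3 : n + (n - k) = k + 2 * (n - k) := by omega
  congr 1
  · simp only [star_mul', RCLike.star_def, map_mul, map_pow, map_neg, map_one, map_natCast]
    rw [Nat.choose_symm hk', ← mul_assoc, ← pow_add, e3, pow_add, pow_mul, neg_one_sq,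
      one_pow, mul_one]
  · rw [star_mul, star_pow, star_pow]

end Aux

/-- Lemma 5.3: if `T ∈ B(H)` is not nilpotent and `λT` lies in the `n`-th Helton class
of `T*` (i.e. `γ_n(T*, λT) = 0`), then `|λ| = 1`. -/
theorem helton_scalar_unimodular
    {H : Type*} [NormedAddCommGroup H] [InnerProductSpace ℂ H] [CompleteSpace H]
    (T : H →L[ℂ] H) (hT : ¬IsNilpotent T) (lam : ℂ) (n : ℕ) (hn : 1 ≤ n)
    (h : gamma n (ContinuousLinearMap.adjoint T) (lam • T) = 0) :
    ‖lam‖ = 1 := by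
  rw [← ContinuousLinearMap.star_eq_adjoint] at h
  set cl := (starRingEnd ℂ) lam with hcl
  have h1 : gamma n (cl • star T) T = 0 := by
    have hs := congrArg star h
    rw [star_zero, star_gamma, star_smul, star_star] at hs
    have hne : ((-1 : ℂ) ^ n) ≠ 0 := by apply pow_ne_zero; norm_num
    have := (smul_eq_zero.mp hs).resolve_left hne
    simpa [hcl, RCLike.star_def] using this
  have h2 : gamma n (cl • star T) ((cl * lam) • T) = 0 := by
    have := gamma_smul_smul n cl (star T) (lam • T)
    rw [h, smul_zero, smul_smul] at this
    exact this
  by_contra hne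
  have hr : cl * lam ≠ 1 := by
    intro he
    apply hne
    rw [hcl, mul_comm, Complex.mul_conj] at he
    have h3 : Complex.normSq lam = 1 := by exact_mod_cast he
    rw [Complex.normSq_eq_norm_sq] at h3
    have habs : ‖lam‖ = 1 := by nlinarith [norm_nonneg lam]
    exact habs
  have := key hn (cl • star T) T (cl * lam) hr h1 h2
  exact hT ⟨2 * n - 1, this⟩
end
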